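/- For every positive integer n, Frisch's identity holds: ∑_{i=0}^{2n-1} (-1)^i * C(2n-1, i) / (n + i) = (n-1)! * (2n-1)! / (3n-1)!. -/

import Mathlib

lemma frisch_aux : ∀ (m : ℕ) (x : ℚ), (∀ i : ℕ, i ≤ m → x + i ≠ 0) →
    ∑ i ∈ Finset.range (m + 1), (-1 : ℚ) ^ i * (m.choose i) / (x + i)
      = (m.factorial : ℚ) / ∏ i ∈ Finset.range (m + 1), (x + i) := by
  intro m
  induction m with
  | zero =>
    intro x hx
    have := hx 0 le_rfl
    simp at this
    simp [this]
  | succ m ih =>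
    intro x hx
    have hx0 : x ≠ 0 := by have := hx 0 (by omega); simpa using this
    have hx1 : ∀ i : ℕ, i ≤ m → (x + 1) + i ≠ 0 := by
      intro i hi
      have := hx (i + 1) (by omega)
      push_cast at this ⊢
      intro h; apply this; linarith
    have hxm : ∀ i : ℕ, i ≤ m → x + i ≠ 0 := fun i hi => hx i (by omega)
    have key : ∑ i ∈ Finset.range (m + 2), (-1 : ℚ) ^ i * ((m+1).choose i) / (x + i)
        = (∑ i ∈ Finset.range (m + 1), (-1 : ℚ) ^ i * (m.choose i) / (x + i))
          - ∑ i ∈ Finset.range (m + 1), (-1 : ℚ) ^ i * (m.choose i) / ((x + 1) + i) := by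
      have h1 : ∑ i ∈ Finset.range (m + 2), (-1 : ℚ) ^ i * ((m+1).choose i) / (x + i)
          = ∑ i ∈ Finset.range (m + 2), ((-1 : ℚ) ^ i * (m.choose i) / (x + i)
            + (if i = 0 then (0:ℚ) else (-1 : ℚ) ^ i * (m.choose (i-1)) / (x + i))) := by
        apply Finset.sum_congr rfl
        intro i _
        match i with
        | 0 => simp
        | (j+1) =>
          rw [if_neg (Nat.succ_ne_zero j), Nat.choose_succ_succ']
          push_cast
          ring
      have h2 : ∑ i ∈ Finset.range (m + 2),
            (if i = 0 then (0:ℚ) else (-1 : ℚ) ^ i * (m.choose (i-1)) / (x + i))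
          = - ∑ i ∈ Finset.range (m + 1), (-1 : ℚ) ^ i * (m.choose i) / ((x + 1) + i) := by
        rw [Finset.sum_range_succ']
        simp only [if_neg (Nat.succ_ne_zero _), Nat.add_sub_cancel, eq_self_iff_true, if_true, add_zero]
        rw [← Finset.sum_neg_distrib]
        apply Finset.sum_congr rfl
        intro i _
        push_cast
        rw [pow_succ]
        ring
      have h3 : ∑ i ∈ Finset.range (m + 2), (-1 : ℚ) ^ i * (m.choose i) / (x + i)
          = ∑ i ∈ Finset.range (m + 1), (-1 : ℚ) ^ i * (m.choose i) / (x + i) := by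
        rw [Finset.sum_range_succ]
        simp [Nat.choose_succ_self]
      rw [h1, Finset.sum_add_distrib, h2, h3]
      ring
    rw [key, ih x hxm, ih (x+1) hx1]
    have hP : (∏ i ∈ Finset.range (m + 1), (x + i)) ≠ 0 := by
      rw [Finset.prod_ne_zero_iff]
      intro i hi
      exact hxm i (Nat.lt_succ_iff.mp (Finset.mem_range.mp hi))
    have hQ : (∏ i ∈ Finset.range (m + 1), ((x + 1) + i)) ≠ 0 := by
      rw [Finset.prod_ne_zero_iff]
      intro i hi
      exact hx1 i (Nat.lt_succ_iff.mp (Finset.mem_range.mp hi))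
    have hlast : x + ((m : ℚ) + 1) ≠ 0 := by
      have := hx (m+1) le_rfl; push_cast at this ⊢; exact this
    have hR1 : ∏ i ∈ Finset.range (m + 2), (x + i)
        = (∏ i ∈ Finset.range (m + 1), (x + i)) * (x + ((m:ℚ) + 1)) := by
      rw [Finset.prod_range_succ]; push_cast; ring
    have hR2 : ∏ i ∈ Finset.range (m + 2), (x + i)
        = x * ∏ i ∈ Finset.range (m + 1), ((x + 1) + i) := by
      rw [Finset.prod_range_succ', mul_comm x]
      congr 1
      · exact Finset.prod_congr rfl fun i _ => by push_cast; ring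
      · simp
    have hQx : x * (∏ i ∈ Finset.range (m + 1), ((x + 1) + i))
        = (∏ i ∈ Finset.range (m + 1), (x + i)) * (x + ((m:ℚ) + 1)) := by
      rw [← hR2, hR1]
    have hfac : ((m+1).factorial : ℚ) = ((m:ℚ)+1) * m.factorial := by
      rw [Nat.factorial_succ]; push_cast; ring
    rw [hR1, hfac, div_sub_div _ _ hP hQ,
      div_eq_div_iff (mul_ne_zero hP hQ) (mul_ne_zero hP hlast)]
    linear_combination (m.factorial : ℚ) * (∏ i ∈ Finset.range (m + 1), (x + i)) * hQx

theorem frisch_identity (n : ℕ) (hn : 1 ≤ n) :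
    ∑ i ∈ Finset.range (2 * n), (-1 : ℚ) ^ i * ((2 * n - 1).choose i) / (n + i) =
      ((n - 1).factorial : ℚ) * ((2 * n - 1).factorial) / ((3 * n - 1).factorial) := by
  obtain ⟨k, rfl⟩ := Nat.exists_eq_add_of_le hn
  set m : ℕ := 2 * (1 + k) - 1 with hm
  have h2n : 2 * (1 + k) = m + 1 := by omega
  have hx : ∀ i : ℕ, i ≤ m → ((1 + k : ℕ) : ℚ) + i ≠ 0 := by
    intro i hi
    push_cast
    positivity
  rw [h2n, frisch_aux m _ hx]
  have hprodfac : ((1 + k - 1).factorial : ℚ) * ∏ i ∈ Finset.range (m + 1), (((1 + k : ℕ) : ℚ) + i)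
      = ((3 * (1 + k) - 1).factorial : ℚ) := by
    have key : ∀ N : ℕ, (k.factorial : ℚ) * ∏ i ∈ Finset.range N, (((1 + k : ℕ) : ℚ) + i)
        = ((k + N).factorial : ℚ) := by
      intro N
      induction N with
      | zero => simp
      | succ N ihN =>
        rw [Finset.prod_range_succ, ← mul_assoc, ihN]
        have : (k + (N+1)).factorial = (k + N + 1) * (k + N).factorial := by
          rw [← Nat.factorial_succ]; ring_nf
        rw [this]
        push_cast
        ring
    have h1 : (1 + k - 1) = k := by omega
    have h2 : k + (m + 1) = 3 * (1 + k) - 1 := by omega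
    rw [h1, key (m + 1), h2]
  rw [div_eq_div_iff, ← hprodfac]
  · ring
  · rw [Finset.prod_ne_zero_iff]
    intro i hi
    exact hx i (Nat.lt_succ_iff.mp (Finset.mem_range.mp hi))
  · exact_mod_cast Nat.factorial_ne_zero _
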